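/- For π²/4 < μ < π², set ψ(t) = sin(2√μ t) - (cos√μ/sin√μ)(1 - cos(2√μ t)). There exists a unique t_μ ∈ (0, 1/2] such that ψ(t_μ) - t_μ·ψ'(t_μ) = 0, with ψ(t) - t·ψ'(t) ≤ 0 on [0, t_μ] and ψ(t) - t·ψ'(t) ≥ 0 on [t_μ, 1]. -/

import Mathlib

open Real

set_option maxHeartbeats 1000000 in
theorem stmt_14 (μ : ℝ) (hμ : π ^ 2 / 4 < μ) (hμ' : μ < π ^ 2)
    (ψ : ℝ → ℝ)
    (hψ : ∀ t, ψ t = Real.sin (2 * Real.sqrt μ * t) -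
      (Real.cos (Real.sqrt μ) / Real.sin (Real.sqrt μ)) * (1 - Real.cos (2 * Real.sqrt μ * t))) :
    ∃ tμ ∈ Set.Ioc (0 : ℝ) (1 / 2),
      ψ tμ - tμ * deriv ψ tμ = 0 ∧
      (∀ t ∈ Set.Icc (0 : ℝ) tμ, ψ t - t * deriv ψ t ≤ 0) ∧
      (∀ t ∈ Set.Icc tμ (1 : ℝ), 0 ≤ ψ t - t * deriv ψ t) ∧
      (∀ s ∈ Set.Ioc (0 : ℝ) (1 / 2), ψ s - s * deriv ψ s = 0 → s = tμ) := by
  have hπ : (0:ℝ) < π := pi_pos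
  set θ := Real.sqrt μ with hθdef
  have hθ1 : π / 2 < θ := by
    have h1 : Real.sqrt (π ^ 2 / 4) < θ := Real.sqrt_lt_sqrt (by positivity) hμ
    have h2 : Real.sqrt (π ^ 2 / 4) = π / 2 := by
      rw [show π ^ 2 / 4 = (π / 2) ^ 2 by ring, Real.sqrt_sq (by positivity)]
    linarith
  have hθ2 : θ < π := by
    have hμ0 : (0:ℝ) ≤ μ := le_of_lt (lt_trans (by positivity) hμ)
    have h1 : θ < Real.sqrt (π ^ 2) := Real.sqrt_lt_sqrt hμ0 hμ'
    rwa [Real.sqrt_sq hπ.le] at h1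
  have hθ0 : 0 < θ := by linarith
  have hs : 0 < Real.sin θ := Real.sin_pos_of_pos_of_lt_pi hθ0 hθ2
  have hc : Real.cos θ < 0 := Real.cos_neg_of_pi_div_two_lt_of_lt hθ1 (by linarith)
  set c := Real.cos θ / Real.sin θ with hcdef
  have hcneg : c < 0 := div_neg_of_neg_of_pos hc hs
  have hψfun : ψ = fun t => Real.sin (2 * θ * t) - c * (1 - Real.cos (2 * θ * t)) :=
    funext hψ
  have h1 : ∀ t : ℝ, HasDerivAt (fun t : ℝ => 2 * θ * t) (2 * θ) t := by
    intro t
    simpa using (hasDerivAt_id t).const_mul (2 * θ)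
  have h2 : ∀ t : ℝ, HasDerivAt (fun t : ℝ => Real.sin (2 * θ * t))
      (Real.cos (2 * θ * t) * (2 * θ)) t := fun t =>
    (Real.hasDerivAt_sin (2 * θ * t)).comp t (h1 t)
  have h3 : ∀ t : ℝ, HasDerivAt (fun t : ℝ => Real.cos (2 * θ * t))
      (-Real.sin (2 * θ * t) * (2 * θ)) t := fun t =>
    (Real.hasDerivAt_cos (2 * θ * t)).comp t (h1 t)
  have hD : ∀ t, HasDerivAt ψ
      (2 * θ * Real.cos (2 * θ * t) - c * (2 * θ * Real.sin (2 * θ * t))) t := by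
    intro t
    rw [hψfun]
    have := (h2 t).sub (((h3 t).const_sub 1).const_mul c)
    exact this.congr_deriv (by ring)
  have hderiv : ∀ t, deriv ψ t =
      2 * θ * Real.cos (2 * θ * t) - c * (2 * θ * Real.sin (2 * θ * t)) := fun t => (hD t).deriv
  set g : ℝ → ℝ := fun t => Real.sin (2 * θ * t) - c * (1 - Real.cos (2 * θ * t)) -
      t * (2 * θ * Real.cos (2 * θ * t) - c * (2 * θ * Real.sin (2 * θ * t))) with hgdef
  have hg : ∀ t, ψ t - t * deriv ψ t = g t := by
    intro t
    rw [hψ t, hderiv t]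
  have hgD : ∀ t, HasDerivAt g
      (t * (2 * θ) ^ 2 * (Real.sin (2 * θ * t) + c * Real.cos (2 * θ * t))) t := by
    intro t
    have h4 : HasDerivAt (fun t : ℝ => t * (2 * θ * Real.cos (2 * θ * t) -
        c * (2 * θ * Real.sin (2 * θ * t))))
        (1 * (2 * θ * Real.cos (2 * θ * t) - c * (2 * θ * Real.sin (2 * θ * t))) +
          t * (2 * θ * (-Real.sin (2 * θ * t) * (2 * θ)) -
            c * (2 * θ * (Real.cos (2 * θ * t) * (2 * θ))))) t :=
      (hasDerivAt_id t).mul (((h3 t).const_mul (2 * θ)).sub (((h2 t).const_mul (2 * θ)).const_mul c))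
    have := ((h2 t).sub (((h3 t).const_sub 1).const_mul c)).sub h4
    exact this.congr_deriv (by ring)
  have hgderiv : deriv g = fun t =>
      t * (2 * θ) ^ 2 * (Real.sin (2 * θ * t) + c * Real.cos (2 * θ * t)) :=
    funext fun t => (hgD t).deriv
  have hgc : Continuous g := by fun_prop
  have hkey : ∀ t : ℝ, Real.sin (2 * θ * t) + c * Real.cos (2 * θ * t) =
      Real.cos (θ * (2 * t - 1)) / Real.sin θ := by
    intro t
    rw [show θ * (2 * t - 1) = 2 * θ * t - θ by ring, Real.cos_sub, hcdef]
    field_simp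
    ring
  set a : ℝ := (1 - π / (2 * θ)) / 2 with hadef
  set b : ℝ := (1 + π / (2 * θ)) / 2 with hbdef
  have hx1 : π / (2 * θ) < 1 := by
    rw [div_lt_one (by linarith)]; linarith
  have hx2 : 1 / 2 < π / (2 * θ) := by
    rw [lt_div_iff₀ (by linarith)]; linarith
  have ha0 : 0 < a := by rw [hadef]; linarith
  have hahalf : a < 1 / 2 := by rw [hadef]; linarith
  have hbhalf : 1 / 2 < b := by rw [hbdef]; linarith
  have hb1 : b < 1 := by rw [hbdef]; linarith
  have hmulpi : θ * (π / (2 * θ)) = π / 2 := by field_simp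
  -- strict antitone on [0, a]
  have hanti : StrictAntiOn g (Set.Icc 0 a) := by
    apply strictAntiOn_of_deriv_neg (convex_Icc _ _) hgc.continuousOn
    intro t ht
    rw [interior_Icc] at ht
    simp only [hgderiv]
    have hcosneg : Real.cos (θ * (2 * t - 1)) < 0 := by
      rw [show θ * (2 * t - 1) = -(θ * (1 - 2 * t)) by ring, Real.cos_neg]
      apply Real.cos_neg_of_pi_div_two_lt_of_lt
      · have hlt : π / (2 * θ) < 1 - 2 * t := by
          have := ht.2; rw [hadef] at this; linarith
        calc π / 2 = θ * (π / (2 * θ)) := hmulpi.symm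
          _ < θ * (1 - 2 * t) := by
            exact mul_lt_mul_of_pos_left hlt hθ0
      · nlinarith [ht.1]
    rw [hkey t]
    have hq : Real.cos (θ * (2 * t - 1)) / Real.sin θ < 0 := div_neg_of_neg_of_pos hcosneg hs
    have ht0 : 0 < t := ht.1
    exact mul_neg_of_pos_of_neg (mul_pos ht0 (pow_pos (by linarith) 2)) hq
  -- strict monotone on [a, b]
  have hmono : StrictMonoOn g (Set.Icc a b) := by
    apply strictMonoOn_of_deriv_pos (convex_Icc _ _) hgc.continuousOn
    intro t ht
    rw [interior_Icc] at ht
    simp only [hgderiv]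
    have hcospos : 0 < Real.cos (θ * (2 * t - 1)) := by
      apply Real.cos_pos_of_mem_Ioo
      constructor
      · have hlt : -(π / (2 * θ)) < 2 * t - 1 := by
          have := ht.1; rw [hadef] at this; linarith
        calc -(π / 2) = θ * (-(π / (2 * θ))) := by rw [mul_neg, hmulpi]
          _ < θ * (2 * t - 1) := mul_lt_mul_of_pos_left hlt hθ0
      · have hlt : 2 * t - 1 < π / (2 * θ) := by
          have := ht.2; rw [hbdef] at this; linarith
        calc θ * (2 * t - 1) < θ * (π / (2 * θ)) := mul_lt_mul_of_pos_left hlt hθ0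
          _ = π / 2 := hmulpi
    rw [hkey t]
    have hq : 0 < Real.cos (θ * (2 * t - 1)) / Real.sin θ := div_pos hcospos hs
    have ht0 : 0 < t := lt_trans ha0 ht.1
    positivity
  -- strict antitone on [b, 1]
  have hanti2 : StrictAntiOn g (Set.Icc b 1) := by
    apply strictAntiOn_of_deriv_neg (convex_Icc _ _) hgc.continuousOn
    intro t ht
    rw [interior_Icc] at ht
    simp only [hgderiv]
    have hcosneg : Real.cos (θ * (2 * t - 1)) < 0 := by
      apply Real.cos_neg_of_pi_div_two_lt_of_lt
      · have hlt : π / (2 * θ) < 2 * t - 1 := by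
          have := ht.1; rw [hbdef] at this; linarith
        calc π / 2 = θ * (π / (2 * θ)) := hmulpi.symm
          _ < θ * (2 * t - 1) := mul_lt_mul_of_pos_left hlt hθ0
      · nlinarith [ht.2]
    rw [hkey t]
    have hq : Real.cos (θ * (2 * t - 1)) / Real.sin θ < 0 := div_neg_of_neg_of_pos hcosneg hs
    have ht0 : 0 < t := by linarith [ht.1, hbhalf]
    exact mul_neg_of_pos_of_neg (mul_pos ht0 (pow_pos (by linarith) 2)) hq
  -- values
  have hg0 : g 0 = 0 := by
    rw [hgdef]
    simp only [mul_zero, zero_mul, Real.sin_zero, Real.cos_zero]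
    ring
  have hghalf : 0 < g (1 / 2) := by
    have heq : g (1 / 2) = (1 - Real.cos θ) / Real.sin θ := by
      rw [hgdef]
      simp only
      rw [show 2 * θ * (1 / 2 : ℝ) = θ by ring, hcdef]
      field_simp
      linear_combination Real.sin_sq_add_cos_sq θ
    rw [heq]
    apply div_pos (by linarith) hs
  have hg1 : g 1 = 2 * θ := by
    rw [hgdef]
    simp only
    rw [show 2 * θ * (1 : ℝ) = 2 * θ by ring, Real.sin_two_mul, Real.cos_two_mul, hcdef]
    field_simp
    linear_combination (2 * Real.cos θ) * Real.sin_sq_add_cos_sq θ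
  have hga : g a < 0 := by
    have := hanti (Set.mem_Icc.mpr ⟨le_refl 0, ha0.le⟩) (Set.mem_Icc.mpr ⟨ha0.le, le_refl a⟩) ha0
    rw [hg0] at this
    exact this
  -- IVT
  have hivt : (0 : ℝ) ∈ g '' Set.Ioo a (1 / 2) := by
    apply intermediate_value_Ioo hahalf.le hgc.continuousOn
    exact ⟨hga, hghalf⟩
  obtain ⟨tμ, htμmem, htμ0⟩ := hivt
  have htμa : a < tμ := htμmem.1
  have htμhalf : tμ < 1 / 2 := htμmem.2
  have htμIcc : tμ ∈ Set.Icc a b := ⟨htμa.le, by linarith⟩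
  refine ⟨tμ, ⟨by linarith, htμhalf.le⟩, ?_, ?_, ?_, ?_⟩
  · rw [hg]; exact htμ0
  · intro t ht
    rw [hg]
    rcases le_or_gt t a with hta | hta
    · rcases eq_or_lt_of_le ht.1 with h0 | h0
      · rw [← h0, hg0]
      · have := hanti (Set.mem_Icc.mpr ⟨le_refl 0, by linarith⟩)
          (Set.mem_Icc.mpr ⟨h0.le, hta⟩) h0
        rw [hg0] at this
        linarith
    · have htIcc : t ∈ Set.Icc a b := ⟨hta.le, by linarith [ht.2]⟩
      have := hmono.monotoneOn htIcc htμIcc ht.2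
      rw [htμ0] at this
      exact this
  · intro t ht
    rw [hg]
    rcases le_or_gt t b with htb | htb
    · have htIcc : t ∈ Set.Icc a b := ⟨by linarith [ht.1], htb⟩
      have := hmono.monotoneOn htμIcc htIcc ht.1
      rw [htμ0] at this
      exact this
    · have := hanti2.antitoneOn (Set.mem_Icc.mpr ⟨htb.le, ht.2⟩)
        (Set.mem_Icc.mpr ⟨hb1.le, le_refl 1⟩) ht.2
      rw [hg1] at this
      linarith
  · intro s hsmem hgs
    rw [hg] at hgs
    rcases le_or_gt s a with hsa | hsa
    · exfalso
      have := hanti (Set.mem_Icc.mpr ⟨le_refl 0, by linarith [hsmem.1]⟩)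
        (Set.mem_Icc.mpr ⟨hsmem.1.le, hsa⟩) hsmem.1
      rw [hg0] at this
      linarith
    · exact hmono.injOn (Set.mem_Icc.mpr ⟨hsa.le, by linarith [hsmem.2]⟩) htμIcc
        (by rw [hgs, htμ0])
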